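/- arXiv:2605.13463 — 4 statements merged into one kernel-verified Lean document; each statement's English description precedes it below -/
import Mathlib

section
/- Let a = (a₁, a₂, a₃) ∈ ℝ³ with a₁ ≠ 0, a₂ ≠ 0, a₃ ≠ 0, and let g₁, g₂, g₃ : ℝ³ → ℝ be C¹ functions satisfying, for each j, the conditions a₁∂₁gⱼ + a₂∂₂gⱼ + a₃∂₃gⱼ = 0 and x₁∂₁gⱼ + x₂∂₂gⱼ + x₃∂₃gⱼ = 2gⱼ. Define eⱼ(x) = −xⱼ²/aⱼ + gⱼ(x) and the vector fields E = Σⱼ eⱼ∂ⱼ, H = 2(x₁∂₁ + x₂∂₂ + x₃∂₃), F = a₁∂₁ + a₂∂₂ + a₃∂₃. Then E, H, F satisfy the sl(2,ℝ) commutation relations [H, E] = 2E, [H, F] = −2F, [E, F] = H. -/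
/-- Partial derivative ∂ᵢf at x of a function on ℝⁿ (modeled as `Fin n → ℝ`). -/
noncomputable def pd {n : ℕ} (f : (Fin n → ℝ) → ℝ) (i : Fin n) (x : Fin n → ℝ) : ℝ :=
  fderiv ℝ f x (Pi.single i 1)

/-- Directional derivative Z(f) = Σⱼ Zⱼ ∂ⱼf of f along the vector field Z. -/
noncomputable def lieD {n : ℕ} (Z : Fin n → (Fin n → ℝ) → ℝ) (f : (Fin n → ℝ) → ℝ)
    (x : Fin n → ℝ) : ℝ :=
  ∑ j, Z j x * pd f j x

lemma pd_const_aux (c : ℝ) (j : Fin 3) (x : Fin 3 → ℝ) :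
    pd (fun _ : Fin 3 → ℝ => c) j x = 0 := by simp [pd]

lemma pd_coord_aux (k j : Fin 3) (x : Fin 3 → ℝ) :
    pd (fun y : Fin 3 → ℝ => 2 * y k) j x = 2 * (if k = j then 1 else 0) := by
  have h : HasFDerivAt (fun y : Fin 3 → ℝ => 2 * y k)
      ((2:ℝ) • (ContinuousLinearMap.proj k : (Fin 3 → ℝ) →L[ℝ] ℝ)) x :=
    ((ContinuousLinearMap.proj k : (Fin 3 → ℝ) →L[ℝ] ℝ).hasFDerivAt).const_mul 2
  rw [pd, h.fderiv]
  simp [Pi.single_apply]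

lemma pd_e_aux (a : ℝ) (g : (Fin 3 → ℝ) → ℝ) (hg : ContDiff ℝ 1 g)
    (i j : Fin 3) (x : Fin 3 → ℝ) :
    pd (fun y => -(y i) ^ 2 / a + g y) j x
      = -(2 * x i) / a * (if i = j then 1 else 0) + pd g j x := by
  have hproj : HasFDerivAt (fun y : Fin 3 → ℝ => y i)
      (ContinuousLinearMap.proj i : (Fin 3 → ℝ) →L[ℝ] ℝ) x :=
    (ContinuousLinearMap.proj i : (Fin 3 → ℝ) →L[ℝ] ℝ).hasFDerivAt
  have hsq : HasFDerivAt (fun y : Fin 3 → ℝ => (y i) ^ 2)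
      ((x i • (ContinuousLinearMap.proj i : (Fin 3 → ℝ) →L[ℝ] ℝ)) +
        x i • (ContinuousLinearMap.proj i : (Fin 3 → ℝ) →L[ℝ] ℝ)) x := by
    simpa [pow_two, Pi.mul_def] using hproj.mul hproj
  have hdiv : HasFDerivAt (fun y : Fin 3 → ℝ => -(y i) ^ 2 / a)
      (a⁻¹ • -(x i • (ContinuousLinearMap.proj i : (Fin 3 → ℝ) →L[ℝ] ℝ) +
        x i • (ContinuousLinearMap.proj i : (Fin 3 → ℝ) →L[ℝ] ℝ))) x := by
    simpa [div_eq_mul_inv, smul_smul, mul_comm] using (hsq.neg).mul_const a⁻¹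
  have hgd : HasFDerivAt g (fderiv ℝ g x) x :=
    (hg.differentiable one_ne_zero x).hasFDerivAt
  have h : HasFDerivAt (fun y : Fin 3 → ℝ => -(y i) ^ 2 / a + g y) _ x := hdiv.add hgd
  rw [pd, h.fderiv]
  simp only [ContinuousLinearMap.add_apply, ContinuousLinearMap.smul_apply,
    ContinuousLinearMap.neg_apply, ContinuousLinearMap.coe_smul', Pi.smul_apply,
    ContinuousLinearMap.proj_apply, Pi.single_apply, pd, smul_eq_mul]
  by_cases hij : i = j <;> simp [hij] <;> ring

/-- With eⱼ = −xⱼ²/aⱼ + gⱼ, where F(gⱼ) = 0 and H(gⱼ) = 2gⱼ (degree-two homogeneity),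
the fields E = Σeⱼ∂ⱼ, H = 2Σxⱼ∂ⱼ, F = Σaⱼ∂ⱼ satisfy the sl(2,ℝ) relations
[H,E] = 2E, [H,F] = −2F, [E,F] = H, with [X,Y]ᵢ = X(Yᵢ) − Y(Xᵢ). -/
theorem sl2_realisation_R3 (a : Fin 3 → ℝ) (ha : ∀ j, a j ≠ 0)
    (g : Fin 3 → (Fin 3 → ℝ) → ℝ) (hg : ∀ j, ContDiff ℝ 1 (g j))
    (hgF : ∀ j (x : Fin 3 → ℝ), ∑ i, a i * pd (g j) i x = 0)
    (hgH : ∀ j (x : Fin 3 → ℝ), ∑ i, x i * pd (g j) i x = 2 * g j x) :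
    ∀ (i : Fin 3) (x : Fin 3 → ℝ),
      (lieD (fun j y => 2 * y j) (fun y => -(y i) ^ 2 / a i + g i y) x -
          lieD (fun j y => -(y j) ^ 2 / a j + g j y) (fun y => 2 * y i) x =
        2 * (-(x i) ^ 2 / a i + g i x)) ∧
      (lieD (fun j y => 2 * y j) (fun _ => a i) x -
          lieD (fun j _ => a j) (fun y => 2 * y i) x = -2 * a i) ∧
      (lieD (fun j y => -(y j) ^ 2 / a j + g j y) (fun _ => a i) x -
          lieD (fun j _ => a j) (fun y => -(y i) ^ 2 / a i + g i y) x = 2 * x i) := by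
  intro i x
  have hH := hgH i x
  have hF := hgF i x
  rw [Fin.sum_univ_three] at hH hF
  refine ⟨?_, ?_, ?_⟩
  · simp only [lieD, Fin.sum_univ_three, pd_e_aux (a i) (g i) (hg i),
      pd_coord_aux, pd_const_aux]
    fin_cases i <;> simp_all <;> linear_combination 2 * hH
  · simp only [lieD, Fin.sum_univ_three, pd_coord_aux, pd_const_aux]
    fin_cases i <;> simp <;> ring
  · simp only [lieD, Fin.sum_univ_three, pd_e_aux (a i) (g i) (hg i),
      pd_coord_aux, pd_const_aux]
    fin_cases i <;> simp_all
    · linear_combination 2 * x 0 * mul_inv_cancel₀ (ha 0) - hF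
    · linear_combination 2 * x 1 * mul_inv_cancel₀ (ha 1) - hF
    · linear_combination 2 * x 2 * mul_inv_cancel₀ (ha 2) - hF
end

section
/- Let E be the Darboux–Halphen vector field on ℝ³, let H = 2(x₁∂₁ + x₂∂₂ + x₃∂₃) and F = ∂₁ + ∂₂ + ∂₃. Then the three vector fields satisfy the sl(2,ℝ) commutation relations: [H, E] = 2E, [H, F] = −2F, and [E, F] = H. -/
/-- The Darboux–Halphen vector field on ℝ³ (0-indexed coordinates). -/
noncomputable def DH : Fin 3 → (Fin 3 → ℝ) → ℝ :=
  ![fun x => x 1 * x 2 - x 0 * (x 1 + x 2),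
    fun x => x 0 * x 2 - x 1 * (x 0 + x 2),
    fun x => x 0 * x 1 - x 2 * (x 0 + x 1)]

/-- The dilation field H = 2Σxⱼ∂ⱼ on ℝ³. -/
noncomputable def Hfield : Fin 3 → (Fin 3 → ℝ) → ℝ := fun j y => 2 * y j

/-- The constant field F = ∂₁ + ∂₂ + ∂₃ on ℝ³. -/
noncomputable def Ffield : Fin 3 → (Fin 3 → ℝ) → ℝ := fun _ _ => 1

noncomputable def pj (j : Fin 3) : (Fin 3 → ℝ) →L[ℝ] ℝ := ContinuousLinearMap.proj j

lemma hpj (j : Fin 3) (x : Fin 3 → ℝ) :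
    HasFDerivAt (fun y : Fin 3 → ℝ => y j) (pj j) x := (pj j).hasFDerivAt

lemma pd_DH0 (j : Fin 3) (x : Fin 3 → ℝ) :
    pd (DH 0) j x
      = x 1 * (Pi.single j 1 : Fin 3 → ℝ) 2 + x 2 * (Pi.single j 1 : Fin 3 → ℝ) 1
        - (x 0 * (Pi.single j 1 : Fin 3 → ℝ) 1 + x 0 * (Pi.single j 1 : Fin 3 → ℝ) 2
            + (x 1 + x 2) * (Pi.single j 1 : Fin 3 → ℝ) 0) := by
  have h := ((hpj 1 x).mul (hpj 2 x)).sub ((hpj 0 x).mul ((hpj 1 x).add (hpj 2 x)))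
  show fderiv ℝ (DH 0) x (Pi.single j 1) = _
  have hDH : DH 0 = fun y : Fin 3 → ℝ => y 1 * y 2 - y 0 * (y 1 + y 2) := rfl
  rw [hDH, HasFDerivAt.fderiv (f := fun y : Fin 3 → ℝ => y 1 * y 2 - y 0 * (y 1 + y 2)) h]
  simp [pj]
  try ring

lemma pd_DH1 (j : Fin 3) (x : Fin 3 → ℝ) :
    pd (DH 1) j x
      = x 0 * (Pi.single j 1 : Fin 3 → ℝ) 2 + x 2 * (Pi.single j 1 : Fin 3 → ℝ) 0
        - (x 1 * (Pi.single j 1 : Fin 3 → ℝ) 0 + x 1 * (Pi.single j 1 : Fin 3 → ℝ) 2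
            + (x 0 + x 2) * (Pi.single j 1 : Fin 3 → ℝ) 1) := by
  have h := ((hpj 0 x).mul (hpj 2 x)).sub ((hpj 1 x).mul ((hpj 0 x).add (hpj 2 x)))
  show fderiv ℝ (DH 1) x (Pi.single j 1) = _
  have hDH : DH 1 = fun y : Fin 3 → ℝ => y 0 * y 2 - y 1 * (y 0 + y 2) := rfl
  rw [hDH, HasFDerivAt.fderiv (f := fun y : Fin 3 → ℝ => y 0 * y 2 - y 1 * (y 0 + y 2)) h]
  simp [pj]
  try ring

lemma pd_DH2 (j : Fin 3) (x : Fin 3 → ℝ) :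
    pd (DH 2) j x
      = x 0 * (Pi.single j 1 : Fin 3 → ℝ) 1 + x 1 * (Pi.single j 1 : Fin 3 → ℝ) 0
        - (x 2 * (Pi.single j 1 : Fin 3 → ℝ) 0 + x 2 * (Pi.single j 1 : Fin 3 → ℝ) 1
            + (x 0 + x 1) * (Pi.single j 1 : Fin 3 → ℝ) 2) := by
  have h := ((hpj 0 x).mul (hpj 1 x)).sub ((hpj 2 x).mul ((hpj 0 x).add (hpj 1 x)))
  show fderiv ℝ (DH 2) x (Pi.single j 1) = _
  have hDH : DH 2 = fun y : Fin 3 → ℝ => y 0 * y 1 - y 2 * (y 0 + y 1) := rfl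
  rw [hDH, HasFDerivAt.fderiv (f := fun y : Fin 3 → ℝ => y 0 * y 1 - y 2 * (y 0 + y 1)) h]
  simp [pj]
  try ring

lemma pd_H (i j : Fin 3) (x : Fin 3 → ℝ) :
    pd (Hfield i) j x = 2 * (Pi.single j 1 : Fin 3 → ℝ) i := by
  have h : HasFDerivAt (Hfield i) ((2:ℝ) • pj i) x := ((hpj i x).const_mul 2)
  show fderiv ℝ (Hfield i) x (Pi.single j 1) = _
  rw [h.fderiv]; simp [pj]

lemma pd_F (i j : Fin 3) (x : Fin 3 → ℝ) : pd (Ffield i) j x = 0 := by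
  show fderiv ℝ (Ffield i) x (Pi.single j 1) = 0
  rw [show Ffield i = fun _ => (1:ℝ) from rfl, fderiv_fun_const]
  simp


lemma sl2_case (i : Fin 3) (x : Fin 3 → ℝ) :
      (lieD Hfield (DH i) x - lieD DH (Hfield i) x = 2 * DH i x) ∧
      (lieD Hfield (Ffield i) x - lieD Ffield (Hfield i) x = -2 * Ffield i x) ∧
      (lieD DH (Ffield i) x - lieD Ffield (DH i) x = Hfield i x) := by
  refine ⟨?_, ?_, ?_⟩ <;>
  · simp only [lieD, Fin.sum_univ_three]
    fin_cases i <;>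
      simp only [show (⟨0, by omega⟩ : Fin 3) = 0 from rfl,
        show (⟨1, by omega⟩ : Fin 3) = 1 from rfl,
        show (⟨2, by omega⟩ : Fin 3) = 2 from rfl,
        pd_DH0, pd_DH1, pd_DH2, pd_H, pd_F] <;>
      simp [Hfield, Ffield, DH, Pi.single_apply] <;> ring

/-- The Darboux–Halphen field E together with H = 2Σxⱼ∂ⱼ and F = ∂₁+∂₂+∂₃
satisfies [H,E] = 2E, [H,F] = −2F, [E,F] = H, where [X,Y]ᵢ = X(Yᵢ) − Y(Xᵢ). -/
theorem darboux_halphen_sl2 :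
    ∀ (i : Fin 3) (x : Fin 3 → ℝ),
      (lieD Hfield (DH i) x - lieD DH (Hfield i) x = 2 * DH i x) ∧
      (lieD Hfield (Ffield i) x - lieD Ffield (Hfield i) x = -2 * Ffield i x) ∧
      (lieD DH (Ffield i) x - lieD Ffield (DH i) x = Hfield i x) :=
  sl2_case
end

section
/- Fix n ≥ 1 and a = (a₁, …, aₙ) ∈ ℝⁿ with all aⱼ ≠ 0. Let g₁, …, gₙ : ℝⁿ → ℝ be C¹ functions satisfying, for each j, Σᵢ aᵢ∂ᵢgⱼ = 0 and Σᵢ xᵢ∂ᵢgⱼ = 2gⱼ. Define eⱼ(x) = −xⱼ²/aⱼ + gⱼ(x) and the vector fields E = Σⱼ eⱼ∂ⱼ, H = 2Σⱼ xⱼ∂ⱼ, F = Σⱼ aⱼ∂ⱼ on ℝⁿ. Then [H, E] = 2E, [H, F] = −2F and [E, F] = H, i.e. E, H, F realize the Lie algebra sl(2,ℝ) by vector fields on ℝⁿ. -/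
lemma pd_const {n : ℕ} (c : ℝ) (i : Fin n) (x : Fin n → ℝ) :
    pd (fun _ => c) i x = 0 := by
  simp [pd]

lemma pd_lin {n : ℕ} (i j : Fin n) (x : Fin n → ℝ) :
    pd (fun y => 2 * y i) j x = 2 * (if i = j then 1 else 0) := by
  have h : HasFDerivAt (fun y : Fin n → ℝ => 2 * y i)
      ((2 : ℝ) • ContinuousLinearMap.proj (R := ℝ) (φ := fun _ : Fin n => ℝ) i) x := by
    exact ((ContinuousLinearMap.proj (R := ℝ)
      (φ := fun _ : Fin n => ℝ) i).hasFDerivAt (x := x)).const_smul (2 : ℝ)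
  rw [pd, h.fderiv]
  simp [Pi.single_apply]

lemma pd_e {n : ℕ} (a : ℝ) (g : (Fin n → ℝ) → ℝ) (hg : Differentiable ℝ g)
    (i j : Fin n) (x : Fin n → ℝ) :
    pd (fun y => -(y i) ^ 2 / a + g y) j x =
      -(2 * x i) / a * (if i = j then 1 else 0) + pd g j x := by
  have hp : HasFDerivAt (fun y : Fin n → ℝ => y i)
      (ContinuousLinearMap.proj (R := ℝ) (φ := fun _ : Fin n => ℝ) i) x :=
    (ContinuousLinearMap.proj (R := ℝ) (φ := fun _ : Fin n => ℝ) i).hasFDerivAt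
  have h2 : HasFDerivAt (fun y : Fin n → ℝ => -(y i) ^ 2 / a + g y)
      ((-(2 * x i) / a) • ContinuousLinearMap.proj (R := ℝ) (φ := fun _ : Fin n => ℝ) i
        + fderiv ℝ g x) x := by
    have hq := (((hp.mul hp).neg).const_smul a⁻¹).add (hg x).hasFDerivAt
    have hfun : (fun y : Fin n → ℝ => -(y i) ^ 2 / a + g y)
        = fun y => a⁻¹ • (-((fun y : Fin n → ℝ => y i) y * (fun y : Fin n → ℝ => y i) y)) + g y := by
      funext y; simp [smul_eq_mul]; ring
    rw [hfun]
    refine hq.congr_fderiv ?_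
    ext v
    simp [smul_eq_mul]
    ring
  rw [pd, h2.fderiv]
  simp [Pi.single_apply, pd]

/-- In ℝⁿ (n ≥ 1), with eⱼ = −xⱼ²/aⱼ + gⱼ, where Σᵢaᵢ∂ᵢgⱼ = 0 and Σᵢxᵢ∂ᵢgⱼ = 2gⱼ,
the fields E = Σeⱼ∂ⱼ, H = 2Σxⱼ∂ⱼ, F = Σaⱼ∂ⱼ realize sl(2,ℝ):
[H,E] = 2E, [H,F] = −2F, [E,F] = H, where [X,Y]ᵢ = X(Yᵢ) − Y(Xᵢ). -/
theorem sl2_realisation_Rn (n : ℕ) (hn : 1 ≤ n) (a : Fin n → ℝ) (ha : ∀ j, a j ≠ 0)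
    (g : Fin n → (Fin n → ℝ) → ℝ) (hg : ∀ j, ContDiff ℝ 1 (g j))
    (hgF : ∀ j (x : Fin n → ℝ), ∑ i, a i * pd (g j) i x = 0)
    (hgH : ∀ j (x : Fin n → ℝ), ∑ i, x i * pd (g j) i x = 2 * g j x) :
    ∀ (i : Fin n) (x : Fin n → ℝ),
      (lieD (fun j y => 2 * y j) (fun y => -(y i) ^ 2 / a i + g i y) x -
          lieD (fun j y => -(y j) ^ 2 / a j + g j y) (fun y => 2 * y i) x =
        2 * (-(x i) ^ 2 / a i + g i x)) ∧
      (lieD (fun j y => 2 * y j) (fun _ => a i) x -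
          lieD (fun j _ => a j) (fun y => 2 * y i) x = -2 * a i) ∧
      (lieD (fun j y => -(y j) ^ 2 / a j + g j y) (fun _ => a i) x -
          lieD (fun j _ => a j) (fun y => -(y i) ^ 2 / a i + g i y) x = 2 * x i) := by
  intro i x
  have hdg : ∀ j, Differentiable ℝ (g j) := fun j => (hg j).differentiable one_ne_zero
  have keyH : ∑ j, x j * pd (g i) j x = 2 * g i x := hgH i x
  have keyF : ∑ j, a j * pd (g i) j x = 0 := hgF i x
  refine ⟨?_, ?_, ?_⟩
  · simp only [lieD, pd_lin]
    rw [Finset.sum_congr rfl (fun j _ => by rw [pd_e (a i) (g i) (hdg i) i j x])]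
    have h1 : ∑ j, 2 * x j * (-(2 * x i) / a i * (if i = j then 1 else 0) + pd (g i) j x)
        = (∑ j, (if i = j then 2 * x i * (-(2 * x i) / a i) else 0))
          + 2 * ∑ j, x j * pd (g i) j x := by
      rw [Finset.mul_sum, ← Finset.sum_add_distrib]
      refine Finset.sum_congr rfl fun j _ => ?_
      split
      · rename_i h; subst h; ring
      · ring
    rw [h1, Finset.sum_ite_eq, keyH]
    have h2 : ∑ j, (-(x j) ^ 2 / a j + g j x) * (2 * (if i = j then 1 else 0))
        = (∑ j, if i = j then 2 * (-(x j) ^ 2 / a j + g j x) else 0) := by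
      refine Finset.sum_congr rfl fun j _ => ?_
      split <;> ring
    rw [h2, Finset.sum_ite_eq]
    simp only [Finset.mem_univ, if_true]
    ring
  · simp only [lieD, pd_lin, pd_const, mul_zero, Finset.sum_const_zero]
    have h2 : ∑ j, a j * (2 * (if i = j then 1 else 0))
        = (∑ j, if i = j then 2 * a j else 0) := by
      refine Finset.sum_congr rfl fun j _ => ?_
      split <;> ring
    rw [h2, Finset.sum_ite_eq]
    simp only [Finset.mem_univ, if_true]
    ring
  · simp only [lieD, pd_const, mul_zero, Finset.sum_const_zero]
    rw [Finset.sum_congr rfl (fun j _ => by rw [pd_e (a i) (g i) (hdg i) i j x])]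
    have h2 : ∑ j, a j * (-(2 * x i) / a i * (if i = j then 1 else 0) + pd (g i) j x)
        = (∑ j, (if i = j then a j * (-(2 * x i) / a i) else 0))
          + ∑ j, a j * pd (g i) j x := by
      rw [← Finset.sum_add_distrib]
      refine Finset.sum_congr rfl fun j _ => ?_
      split <;> ring
    rw [h2, Finset.sum_ite_eq, keyF]
    simp only [Finset.mem_univ, if_true]
    rw [mul_div_assoc']
    field_simp
    rw [mul_assoc, mul_div_cancel_left₀ _ (ha i)]
    ring
end

section
/- In ℝ⁴, fix a = (a₁, a₂, a₃, a₄) with all aⱼ ≠ 0, and let E = Σⱼ eⱼ∂ⱼ with eⱼ(x) = −xⱼ²/aⱼ. Then the rational functions I₁ = (a₁x₂ − a₂x₁)/(x₁x₂), I₂ = (a₁x₃ − a₃x₁)/(x₁x₃), I₃ = (a₁x₄ − a₄x₁)/(x₁x₄) are first integrals of E on the open set where x₁x₂x₃x₄ ≠ 0, i.e. E(Iₖ) = Σⱼ eⱼ∂ⱼIₖ = 0 for k = 1, 2, 3; moreover the gradients ∇I₁, ∇I₂, ∇I₃ are linearly independent at every point of that set. -/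
lemma pd_I (c d : ℝ) (i j : Fin 4) (x : Fin 4 → ℝ) (hi : x i ≠ 0) (hj : x j ≠ 0) (k : Fin 4) :
    pd (fun y => (c * y j - d * y i) / (y i * y j)) k x =
      (-c / (x i) ^ 2) * ((Pi.single k 1 : Fin 4 → ℝ) i) + (d / (x j) ^ 2) * ((Pi.single k 1 : Fin 4 → ℝ) j) := by
  have h1 : HasFDerivAt (fun y : Fin 4 → ℝ => c / y i)
      ((-c / (x i) ^ 2) • (ContinuousLinearMap.proj i : (Fin 4 → ℝ) →L[ℝ] ℝ)) x := by
    have : HasDerivAt (fun t : ℝ => c / t) (-c / (x i) ^ 2) (x i) := by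
      simpa [div_eq_mul_inv, neg_div, mul_comm] using (hasDerivAt_inv hi).const_mul c
    exact this.comp_hasFDerivAt x
      (ContinuousLinearMap.proj i : (Fin 4 → ℝ) →L[ℝ] ℝ).hasFDerivAt
  have h2 : HasFDerivAt (fun y : Fin 4 → ℝ => d / y j)
      ((-d / (x j) ^ 2) • (ContinuousLinearMap.proj j : (Fin 4 → ℝ) →L[ℝ] ℝ)) x := by
    have : HasDerivAt (fun t : ℝ => d / t) (-d / (x j) ^ 2) (x j) := by
      simpa [div_eq_mul_inv, neg_div, mul_comm] using (hasDerivAt_inv hj).const_mul d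
    exact this.comp_hasFDerivAt x
      (ContinuousLinearMap.proj j : (Fin 4 → ℝ) →L[ℝ] ℝ).hasFDerivAt
  have hg : HasFDerivAt (fun y : Fin 4 → ℝ => c / y i - d / y j)
      ((-c / (x i) ^ 2) • (ContinuousLinearMap.proj i : (Fin 4 → ℝ) →L[ℝ] ℝ)
        - (-d / (x j) ^ 2) • (ContinuousLinearMap.proj j : (Fin 4 → ℝ) →L[ℝ] ℝ)) x :=
    h1.sub h2
  have heq : (fun y : Fin 4 → ℝ => (c * y j - d * y i) / (y i * y j)) =ᶠ[nhds x]
      (fun y : Fin 4 → ℝ => c / y i - d / y j) := by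
    have hopen : IsOpen {y : Fin 4 → ℝ | y i ≠ 0 ∧ y j ≠ 0} :=
      ((isOpen_ne.preimage (continuous_apply i)).inter
        (isOpen_ne.preimage (continuous_apply j)))
    filter_upwards [hopen.mem_nhds ⟨hi, hj⟩] with y hy
    obtain ⟨hyi, hyj⟩ := hy
    field_simp
  have : fderiv ℝ (fun y : Fin 4 → ℝ => (c * y j - d * y i) / (y i * y j)) x =
      ((-c / (x i) ^ 2) • (ContinuousLinearMap.proj i : (Fin 4 → ℝ) →L[ℝ] ℝ)
        - (-d / (x j) ^ 2) • (ContinuousLinearMap.proj j : (Fin 4 → ℝ) →L[ℝ] ℝ)) :=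
    by rw [heq.fderiv_eq]; exact hg.fderiv
  simp only [pd, this, ContinuousLinearMap.sub_apply, ContinuousLinearMap.smul_apply,
    ContinuousLinearMap.proj_apply, smul_eq_mul]
  ring

/-- In ℝ⁴ with E = Σⱼ(−xⱼ²/aⱼ)∂ⱼ (all aⱼ ≠ 0), the rational functions
I₁ = (a₁x₂ − a₂x₁)/(x₁x₂), I₂ = (a₁x₃ − a₃x₁)/(x₁x₃), I₃ = (a₁x₄ − a₄x₁)/(x₁x₄)
are first integrals of E on {x₁x₂x₃x₄ ≠ 0} with linearly independent gradients. -/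
theorem first_integrals_R4 (a : Fin 4 → ℝ) (ha : ∀ j, a j ≠ 0) (x : Fin 4 → ℝ)
    (hx : x 0 * x 1 * x 2 * x 3 ≠ 0) :
    lieD (fun j y => -(y j) ^ 2 / a j)
        (fun y => (a 0 * y 1 - a 1 * y 0) / (y 0 * y 1)) x = 0 ∧
    lieD (fun j y => -(y j) ^ 2 / a j)
        (fun y => (a 0 * y 2 - a 2 * y 0) / (y 0 * y 2)) x = 0 ∧
    lieD (fun j y => -(y j) ^ 2 / a j)
        (fun y => (a 0 * y 3 - a 3 * y 0) / (y 0 * y 3)) x = 0 ∧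
    LinearIndependent ℝ
      ![fun i => pd (fun y => (a 0 * y 1 - a 1 * y 0) / (y 0 * y 1)) i x,
        fun i => pd (fun y => (a 0 * y 2 - a 2 * y 0) / (y 0 * y 2)) i x,
        fun i => pd (fun y => (a 0 * y 3 - a 3 * y 0) / (y 0 * y 3)) i x] := by
  have h0 : x 0 ≠ 0 := fun h => hx (by simp [h])
  have h1 : x 1 ≠ 0 := fun h => hx (by simp [h])
  have h2 : x 2 ≠ 0 := fun h => hx (by simp [h])
  have h3 : x 3 ≠ 0 := fun h => hx (by simp [h])
  have p1 := pd_I (a 0) (a 1) 0 1 x h0 h1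
  have p2 := pd_I (a 0) (a 2) 0 2 x h0 h2
  have p3 := pd_I (a 0) (a 3) 0 3 x h0 h3
  simp only [Pi.single_apply] at p1 p2 p3
  norm_num [Fin.ext_iff, show ((3:Fin 4):ℕ) = 3 from rfl, show ((2:Fin 4):ℕ) = 2 from rfl, show ((1:Fin 4):ℕ) = 1 from rfl, show ((0:Fin 4):ℕ) = 0 from rfl] at p1 p2 p3
  have c3 : ((3:Fin 4):ℕ) = 3 := rfl
  refine ⟨?_, ?_, ?_, ?_⟩
  · simp only [lieD, Fin.sum_univ_four, p1]
    norm_num [c3]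
    field_simp [ha 0, ha 1, ha 2, ha 3]
    ring
  · simp only [lieD, Fin.sum_univ_four, p2]
    norm_num [c3]
    field_simp [ha 0, ha 1, ha 2, ha 3]
    ring
  · simp only [lieD, Fin.sum_univ_four, p3]
    norm_num [c3]
    field_simp [ha 0, ha 1, ha 2, ha 3]
    ring
  · rw [Fintype.linearIndependent_iff]
    intro g hg
    have e1 := congrFun hg 1
    have e2 := congrFun hg 2
    have e3 := congrFun hg 3
    simp only [Fin.sum_univ_three, Matrix.cons_val_zero, Matrix.cons_val_one, Matrix.head_cons,
      Matrix.cons_val_two, Matrix.tail_cons, Pi.add_apply, Pi.smul_apply, smul_eq_mul,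
      Pi.zero_apply, p1, p2, p3] at e1 e2 e3
    norm_num [c3] at e1 e2 e3
    have g0 : g 0 = 0 := by
      rcases e1 with h | h | h
      · exact h
      · exact absurd h (ha 1)
      · exact absurd h h1
    have g1 : g 1 = 0 := by
      rcases e2 with h | h | h
      · exact h
      · exact absurd h (ha 2)
      · exact absurd h h2
    have g2 : g 2 = 0 := by
      rcases e3 with h | h | h
      · exact h
      · exact absurd h (ha 3)
      · exact absurd h h3
    intro i
    fin_cases i <;> assumption
end
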